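/- Let f ∈ G be a bump whose support is bounded above in ℚ but not bounded below (respectively, bounded below but not above). Then there exists a real number a such that the support of f equals {q ∈ ℚ : q < a} (respectively, {q ∈ ℚ : a < q}). -/

import Mathlib

open FirstOrder

/-- `G` is the group of all order-automorphisms of `(ℚ, <)` under composition. -/
abbrev G : Type := ℚ ≃o ℚ

/-- The support of `f ∈ G`: the set of points moved by `f`. -/
def support (f : G) : Set ℚ := {a : ℚ | f a ≠ a}

/-- The orbital relation of `f`: `a ~_f b` iff `f^m a ≤ b ≤ f^n a` for some integers `m, n`. -/
def orbRel (f : G) (a b : ℚ) : Prop := ∃ m n : ℤ, (f ^ m) a ≤ b ∧ b ≤ (f ^ n) a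

/-- An orbital of `f` is an equivalence class of the orbital relation of `f`. -/
def IsOrbital (f : G) (X : Set ℚ) : Prop := ∃ a : ℚ, X = {b : ℚ | orbRel f a b}

/-- An orbital is nontrivial if it contains a point moved by `f`. -/
def IsNontrivialOrbital (f : G) (X : Set ℚ) : Prop :=
  IsOrbital f X ∧ ∃ a ∈ X, f a ≠ a

/-- A bump is a non-identity element of `G` with exactly one nontrivial orbital. -/
def IsBump (f : G) : Prop := f ≠ 1 ∧ ∃! X : Set ℚ, IsNontrivialOrbital f X

/-- `g` is a restriction of `f`: the support of `g` is contained in that of `f`, and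
`g` agrees with `f` on the support of `g`. -/
def IsRestriction (g f : G) : Prop :=
  support g ⊆ support f ∧ ∀ a ∈ support g, g a = f a

lemma zpow_fix (f : G) {a : ℚ} (h : f a = a) (k : ℤ) : (f ^ k) a = a := by
  induction k using Int.induction_on with
  | zero => simp
  | succ n ih =>
    rw [zpow_add, zpow_one]
    show (f ^ (n:ℤ)) (f a) = a
    rw [h, ih]
  | pred n ih =>
    have he : (-(n:ℤ) - 1) = (-(n:ℤ)) + (-1) := by ring
    rw [he, zpow_add]
    show (f ^ (-(n:ℤ))) ((f ^ (-1:ℤ)) a) = a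
    rw [zpow_neg_one]
    show (f ^ (-(n:ℤ))) (f⁻¹ a) = a
    have h' : f⁻¹ a = a := by
      have := congrArg (f⁻¹ : G) h
      simpa using this.symm ▸ (by simp : (f⁻¹ : G) (f a) = a)
    rw [h', ih]

/-- a point orbit-related to a moved point is moved -/
lemma moved_of_orbRel (f : G) {a c : ℚ} (ha : f a ≠ a) (h : orbRel f a c) : f c ≠ c := by
  intro hc
  obtain ⟨m, n, h1, h2⟩ := h
  rcases lt_trichotomy a c with hac | hac | hac
  · have : (f ^ n) a < (f ^ n) c := (OrderIso.lt_iff_lt _).mpr hac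
    rw [zpow_fix f hc] at this
    exact absurd (h2.trans_lt this) (lt_irrefl c)
  · exact ha (hac ▸ hc)
  · have : (f ^ m) c < (f ^ m) a := (OrderIso.lt_iff_lt _).mpr hac
    rw [zpow_fix f hc] at this
    exact absurd (this.trans_le h1) (lt_irrefl c)

lemma support_convex (f : G) (hb : IsBump f) {x y z : ℚ}
    (hx : x ∈ support f) (hz : z ∈ support f) (hxy : x ≤ y) (hyz : y ≤ z) :
    y ∈ support f := by
  obtain ⟨-, X, hX, huniq⟩ := hb
  have horb : ∀ w : ℚ, f w ≠ w → {b : ℚ | orbRel f w b} = X := by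
    intro w hw
    exact huniq _ ⟨⟨w, rfl⟩, ⟨w, ⟨0, 0, by simp, by simp⟩, hw⟩⟩
  -- z ∈ orbital of z = X = orbital of x
  have hz_in : z ∈ {b : ℚ | orbRel f x b} := by
    rw [horb x hx, ← horb z hz]
    exact ⟨0, 0, by simp, by simp⟩
  obtain ⟨m, n, -, h2⟩ := hz_in
  have hy : orbRel f x y := ⟨0, n, by simpa using hxy, hyz.trans h2⟩
  exact moved_of_orbRel f hx hy

lemma support_nonempty (f : G) (hb : IsBump f) : (support f).Nonempty := by
  obtain ⟨hne, -⟩ := hb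
  by_contra h
  rw [Set.not_nonempty_iff_eq_empty] at h
  apply hne
  ext a
  have hna : a ∉ support f := by rw [h]; exact Set.notMem_empty a
  have ha : f a = a := not_not.mp (by simpa [support] using hna)
  simpa using ha

lemma exists_gt_in_support (f : G) {q : ℚ} (hq : q ∈ support f) :
    ∃ r ∈ support f, q < r := by
  rcases lt_or_gt_of_ne (Ne.symm hq) with h | h
  · -- q < f q
    refine ⟨f q, ?_, h⟩
    have : f q < f (f q) := (OrderIso.lt_iff_lt f).mpr h
    exact ne_of_gt this
  · -- f q < q, so q < f⁻¹ q and f⁻¹ q moved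
    refine ⟨f⁻¹ q, ?_, ?_⟩
    · show f (f⁻¹ q) ≠ f⁻¹ q
      have h' : q < f⁻¹ q := by
        have := (OrderIso.lt_iff_lt (f⁻¹ : G)).mpr h
        simpa using this
      have : f (f⁻¹ q) = q := by simp
      rw [this]; exact ne_of_lt h'
    · have := (OrderIso.lt_iff_lt (f⁻¹ : G)).mpr h
      simpa using this

lemma exists_lt_in_support (f : G) {q : ℚ} (hq : q ∈ support f) :
    ∃ r ∈ support f, r < q := by
  rcases lt_or_gt_of_ne (Ne.symm hq) with h | h
  · refine ⟨f⁻¹ q, ?_, ?_⟩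
    · show f (f⁻¹ q) ≠ f⁻¹ q
      have h' : f⁻¹ q < q := by
        have := (OrderIso.lt_iff_lt (f⁻¹ : G)).mpr h
        simpa using this
      have : f (f⁻¹ q) = q := by simp
      rw [this]; exact ne_of_gt h'
    · have := (OrderIso.lt_iff_lt (f⁻¹ : G)).mpr h
      simpa using this
  · refine ⟨f q, ?_, h⟩
    have : f (f q) < f q := (OrderIso.lt_iff_lt f).mpr h
    exact ne_of_lt this


/-- A bump whose support is bounded above but not below has support `{q : ℚ | q < a}` for some
real `a`; respectively, a bump whose support is bounded below but not above has support
`{q : ℚ | a < q}` for some real `a`. -/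
theorem cofinal_bump_support
    (f : G) (hb : IsBump f) :
    (BddAbove (support f) ∧ ¬ BddBelow (support f) →
      ∃ a : ℝ, support f = {q : ℚ | (q : ℝ) < a}) ∧
    (BddBelow (support f) ∧ ¬ BddAbove (support f) →
      ∃ a : ℝ, support f = {q : ℚ | a < (q : ℝ)}) := by
  have hne := support_nonempty f hb
  constructor
  · rintro ⟨hA, hB⟩
    set S : Set ℝ := (↑) '' support f with hS
    have hSne : S.Nonempty := hne.image _
    have hSbdd : BddAbove S := by
      obtain ⟨b, hbb⟩ := hA
      exact ⟨(b : ℝ), by rintro x ⟨r, hr, rfl⟩; exact_mod_cast hbb hr⟩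
    refine ⟨sSup S, ?_⟩
    ext q
    simp only [Set.mem_setOf_eq]
    constructor
    · intro hq
      obtain ⟨r, hr, hqr⟩ := exists_gt_in_support f hq
      calc (q : ℝ) < r := by exact_mod_cast hqr
        _ ≤ sSup S := le_csSup hSbdd ⟨r, hr, rfl⟩
    · intro hq
      obtain ⟨x, hx, hqx⟩ := exists_lt_of_lt_csSup hSne hq
      obtain ⟨r, hr, rfl⟩ := hx
      have hqr : q < r := by exact_mod_cast hqx
      obtain ⟨t, ht, htq⟩ := (not_bddBelow_iff.mp hB) q
      exact support_convex f hb ht hr htq.le hqr.le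
  · rintro ⟨hA, hB⟩
    set S : Set ℝ := (↑) '' support f with hS
    have hSne : S.Nonempty := hne.image _
    have hSbdd : BddBelow S := by
      obtain ⟨b, hbb⟩ := hA
      exact ⟨(b : ℝ), by rintro x ⟨r, hr, rfl⟩; exact_mod_cast hbb hr⟩
    refine ⟨sInf S, ?_⟩
    ext q
    simp only [Set.mem_setOf_eq]
    constructor
    · intro hq
      obtain ⟨r, hr, hrq⟩ := exists_lt_in_support f hq
      calc sInf S ≤ r := csInf_le hSbdd ⟨r, hr, rfl⟩
        _ < q := by exact_mod_cast hrq
    · intro hq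
      obtain ⟨x, hx, hxq⟩ := exists_lt_of_csInf_lt hSne hq
      obtain ⟨r, hr, rfl⟩ := hx
      have hrq : r < q := by exact_mod_cast hxq
      obtain ⟨t, ht, hqt⟩ := (not_bddAbove_iff.mp hB) q
      exact support_convex f hb hr ht hrq.le hqt.le
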